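/- Let D be a connected acyclic rooted digraph with l vertices of indegree at least 2 and whose root r has outdegree d(r) ≥ 2. Then D has an outbranching with at least (l + d(r) − 1)/3 + 1 leaves. -/

import Mathlib

variable {V : Type*}

/-- Reachability by directed paths in a digraph given by its arc relation. -/
def Reaches (A : V → V → Prop) : V → V → Prop :=
  Relation.ReflTransGen A

/-- Reachability by directed paths avoiding the vertex set `S` (i.e. in `D − S`). -/
def ReachesAvoiding (A : V → V → Prop) (S : Set V) : V → V → Prop :=
  Relation.ReflTransGen (fun u v => A u v ∧ u ∉ S ∧ v ∉ S)

/-- A rooted digraph: loopless, the distinguished root `r` has indegree 0 and at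
least two outneighbours, and there is no arc `(x, y)` with `x ≠ r` and `y` an
outneighbour of `r`. -/
def IsRootedDigraph (A : V → V → Prop) (r : V) : Prop :=
  (∀ v, ¬ A v v) ∧
  (∀ v, ¬ A v r) ∧
  (∃ u v, u ≠ v ∧ A r u ∧ A r v) ∧
  ∀ x y, x ≠ r → A r y → ¬ A x y

/-- A rooted digraph is connected if every vertex is reachable from the root. -/
def RConnected (A : V → V → Prop) (r : V) : Prop :=
  ∀ v, Reaches A r v

/-- `S` is a cut of the rooted digraph: `S ⊆ V − r` and some vertex outside `S`
is the endpoint of no directed path from `r` in `D − S`. -/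
def IsCut (A : V → V → Prop) (r : V) (S : Set V) : Prop :=
  r ∉ S ∧ ∃ z ∉ S, ¬ ReachesAvoiding A S r z

/-- A rooted digraph is 2-connected if it has no cut of size at most 1. -/
def TwoConnected (A : V → V → Prop) (r : V) : Prop :=
  ∀ S : Set V, S.ncard ≤ 1 → ¬ IsCut A r S

/-- `T` is an outbranching of the rooted digraph `(A, r)`: a spanning directed
tree rooted at `r` (every vertex other than `r` has a unique in-arc in `T`, the
root has none, and every vertex is reachable from `r` in `T`). -/
def IsOutbranching (A : V → V → Prop) (r : V) (T : V → V → Prop) : Prop :=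
  (∀ u v, T u v → A u v) ∧
  (∀ v, v ≠ r → ∃! u, T u v) ∧
  (∀ u, ¬ T u r) ∧
  ∀ v, Reaches T r v

/-- The number of leaves (vertices of outdegree 0) of an outbranching `T`. -/
noncomputable def leafCount (T : V → V → Prop) : ℕ :=
  {v | ∀ u, ¬ T v u}.ncard

/-- The maximum number of leaves over all outbranchings. -/
noncomputable def maxleaf (A : V → V → Prop) (r : V) : ℕ :=
  sSup {n | ∃ T : V → V → Prop, IsOutbranching A r T ∧ n = leafCount T}

/-- Indegree of a vertex. -/
noncomputable def indeg (A : V → V → Prop) (v : V) : ℕ := {u | A u v}.ncard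

/-- Outdegree of a vertex. -/
noncomputable def outdeg (A : V → V → Prop) (v : V) : ℕ := {u | A v u}.ncard

/-- A vertex is nice if it has a simple in-arc, i.e. an in-arc not belonging to
a 2-circuit. -/
def Nice (A : V → V → Prop) (v : V) : Prop := ∃ u, A u v ∧ ¬ A v u

/-- A vertex is special if it has indegree at least 3 or a simple in-arc. -/
def Special (A : V → V → Prop) (v : V) : Prop := 3 ≤ indeg A v ∨ Nice A v

/-- A non-special vertex: distinct from `r`, with exactly two in-neighbours,
both of which are also its outneighbours. -/
def NonSpecial (A : V → V → Prop) (r : V) (v : V) : Prop :=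
  v ≠ r ∧ ∃ a b, a ≠ b ∧ {u | A u v} = {a, b} ∧ A v a ∧ A v b

/-- `x 0, …, x 4` is a bipath of length 4: the arcs of `D` incident to the
internal vertices `x 1, x 2, x 3` are exactly the arcs `(x i, x (i+1))` and
`(x (i+1), x i)` of the bipath. -/
def IsBipath4 (A : V → V → Prop) (x : Fin 5 → V) : Prop :=
  Function.Injective x ∧
  ∀ i : Fin 5, 0 < (i : ℕ) → (i : ℕ) < 4 →
    (∀ v, A (x i) v ↔ v = x (i - 1) ∨ v = x (i + 1)) ∧
    (∀ v, A v (x i) ↔ v = x (i - 1) ∨ v = x (i + 1))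

/-- A digraph is acyclic if it has no directed cycle. -/
def Acyclic (A : V → V → Prop) : Prop :=
  ∀ u v, A u v → ¬ Reaches A v u


/-! ### Auxiliary machinery for the proof -/

section AuxOutbranching

variable [Fintype V]

/-- Rank of a vertex: number of vertices that reach it. Strictly increases along arcs
of an acyclic digraph. -/
private noncomputable def rkA (A : V → V → Prop) (v : V) : ℕ :=
  {u | Reaches A u v}.ncard

private lemma rkA_lt {A : V → V → Prop} (hacy : Acyclic A) {u v : V} (h : A u v) :
    rkA A u < rkA A v := by
  apply Set.ncard_lt_ncard _ (Set.toFinite _)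
  constructor
  · intro w hw
    exact Relation.ReflTransGen.tail hw h
  · intro hsub
    exact hacy u v h (hsub (Relation.ReflTransGen.refl))

/-- The tree induced by a parent map. -/
private def pmT (r : V) (p : V → V) : V → V → Prop := fun u v => v ≠ r ∧ p v = u

-- The leaves of the tree induced by a parent map.
open scoped Classical in
private noncomputable def pmL (r : V) (p : V → V) : Finset V :=
  Finset.univ.filter (fun v => ∀ u, u ≠ r → p u ≠ v)

-- The children of a vertex in the tree induced by a parent map.
open scoped Classical in
private noncomputable def pmC (r : V) (p : V → V) (v : V) : Finset V :=
  Finset.univ.filter (fun u => u ≠ r ∧ p u = v)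

private lemma pmT_outbranching {A : V → V → Prop} {r : V} (hacy : Acyclic A)
    {p : V → V} (hp : ∀ v, v ≠ r → A (p v) v) : IsOutbranching A r (pmT r p) := by
  refine ⟨?_, ?_, ?_, ?_⟩
  · rintro u v ⟨h1, rfl⟩
    exact hp v h1
  · intro v hv
    exact ⟨p v, ⟨hv, rfl⟩, fun y hy => hy.2.symm⟩
  · rintro u ⟨h, -⟩
    exact h rfl
  · have key : ∀ n v, rkA A v < n → Reaches (pmT r p) r v := by
      intro n
      induction n with
      | zero => intro v h; omega
      | succ n ih =>
        intro v h
        by_cases hv : v = r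
        · subst hv; exact Relation.ReflTransGen.refl
        · have h1 : A (p v) v := hp v hv
          have h2 : rkA A (p v) < n := by
            have := rkA_lt hacy h1; omega
          exact (ih (p v) h2).tail ⟨hv, rfl⟩
    intro v
    exact key (rkA A v + 1) v (Nat.lt_succ_self _)

private lemma leafCount_pmT (r : V) (p : V → V) :
    leafCount (pmT r p) = (pmL r p).card := by
  classical
  have h : {v | ∀ u, ¬ pmT r p v u} = ↑(pmL r p) := by
    ext v
    simp [pmT, pmL, not_and]
  rw [leafCount, h, Set.ncard_coe_finset]

/-- Exchange lemma 1: if `z` is the unique child of its parent and has another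
in-neighbour `u`, then (for a leaf-maximal parent map) `u` cannot be internal. -/
private lemma pm_ex1 {A : V → V → Prop} {r : V} {p : V → V}
    (hp : ∀ v, v ≠ r → A (p v) v)
    (hmax : ∀ q : V → V, (∀ v, v ≠ r → A (q v) v) → (pmL r q).card ≤ (pmL r p).card)
    {z u : V} (hz : z ≠ r) (hA : A u z) (hne : u ≠ p z)
    (hch : pmC r p (p z) = {z}) (hint : ∃ w, w ≠ r ∧ p w = u) : False := by
  classical
  set p' := Function.update p z u with hp'def
  have hp'valid : ∀ v, v ≠ r → A (p' v) v := by
    intro v hv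
    by_cases h : v = z
    · subst h; rw [hp'def, Function.update_self]; exact hA
    · rw [hp'def, Function.update_of_ne h]; exact hp v hv
  have honly : ∀ w, w ≠ r → p w = p z → w = z := by
    intro w hw hpw
    have hmem : w ∈ pmC r p (p z) := by simp [pmC, hw, hpw]
    rwa [hch, Finset.mem_singleton] at hmem
  have hkey : pmL r p' = insert (p z) (pmL r p) := by
    ext v
    simp only [pmL, Finset.mem_insert, Finset.mem_filter, Finset.mem_univ, true_and]
    constructor
    · intro h
      by_cases hv : v = p z
      · exact Or.inl hv
      · refine Or.inr (fun w hw => ?_)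
        by_cases hwz : w = z
        · subst hwz; exact fun hc => hv (hc ▸ rfl)
        · have hh := h w hw
          rwa [hp'def, Function.update_of_ne hwz] at hh
    · intro h w hw
      rcases h with hv | hlv
      · by_cases hwz : w = z
        · subst hwz
          rw [hp'def, Function.update_self, hv]
          exact hne
        · rw [hp'def, Function.update_of_ne hwz]
          intro hc
          exact hwz (honly w hw (hc.trans hv))
      · by_cases hwz : w = z
        · subst hwz
          rw [hp'def, Function.update_self]
          obtain ⟨w', hw', hpw'⟩ := hint
          intro hc
          exact hlv w' hw' (by rw [hpw', hc])
        · rw [hp'def, Function.update_of_ne hwz]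
          exact hlv w hw
  have hpz_not : p z ∉ pmL r p := by
    intro hmem
    simp only [pmL, Finset.mem_filter] at hmem
    exact hmem.2 z hz rfl
  have hle := hmax p' hp'valid
  rw [hkey, Finset.card_insert_of_notMem hpz_not] at hle
  omega

/-- Exchange lemma 2: two distinct unique-children vertices cannot share a
non-parent in-neighbour `u` (for a leaf-maximal parent map). -/
private lemma pm_ex2 {A : V → V → Prop} {r : V} {p : V → V}
    (hp : ∀ v, v ≠ r → A (p v) v)
    (hmax : ∀ q : V → V, (∀ v, v ≠ r → A (q v) v) → (pmL r q).card ≤ (pmL r p).card)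
    {z1 z2 u : V} (h12 : z1 ≠ z2) (hz1 : z1 ≠ r) (hz2 : z2 ≠ r)
    (hA1 : A u z1) (hA2 : A u z2) (hne1 : u ≠ p z1) (hne2 : u ≠ p z2)
    (hch1 : pmC r p (p z1) = {z1}) (hch2 : pmC r p (p z2) = {z2}) : False := by
  classical
  set p' := Function.update (Function.update p z1 u) z2 u with hp'def
  have hp'z1 : p' z1 = u := by
    rw [hp'def, Function.update_of_ne h12, Function.update_self]
  have hp'z2 : p' z2 = u := by
    rw [hp'def, Function.update_self]
  have hp'other : ∀ w, w ≠ z1 → w ≠ z2 → p' w = p w := by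
    intro w hw1 hw2
    rw [hp'def, Function.update_of_ne hw2, Function.update_of_ne hw1]
  have hp'valid : ∀ v, v ≠ r → A (p' v) v := by
    intro v hv
    by_cases h1 : v = z1
    · subst h1; rw [hp'z1]; exact hA1
    · by_cases h2 : v = z2
      · subst h2; rw [hp'z2]; exact hA2
      · rw [hp'other v h1 h2]; exact hp v hv
  have honly1 : ∀ w, w ≠ r → p w = p z1 → w = z1 := by
    intro w hw hpw
    have hmem : w ∈ pmC r p (p z1) := by simp [pmC, hw, hpw]
    rwa [hch1, Finset.mem_singleton] at hmem
  have honly2 : ∀ w, w ≠ r → p w = p z2 → w = z2 := by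
    intro w hw hpw
    have hmem : w ∈ pmC r p (p z2) := by simp [pmC, hw, hpw]
    rwa [hch2, Finset.mem_singleton] at hmem
  have hpp : p z1 ≠ p z2 := by
    intro h
    exact h12 (honly2 z1 hz1 h)
  have hpz1_not : p z1 ∉ pmL r p := by
    intro hmem
    simp only [pmL, Finset.mem_filter] at hmem
    exact hmem.2 z1 hz1 rfl
  have hpz2_not : p z2 ∉ pmL r p := by
    intro hmem
    simp only [pmL, Finset.mem_filter] at hmem
    exact hmem.2 z2 hz2 rfl
  have hsub : insert (p z1) (insert (p z2) ((pmL r p).erase u)) ⊆ pmL r p' := by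
    intro v hv
    simp only [Finset.mem_insert, Finset.mem_erase] at hv
    simp only [pmL, Finset.mem_filter, Finset.mem_univ, true_and]
    rcases hv with hv | hv | ⟨hvu, hvL⟩
    · subst hv
      intro w hw
      by_cases h1 : w = z1
      · subst h1; rw [hp'z1]; exact hne1
      · by_cases h2 : w = z2
        · subst h2; rw [hp'z2]; exact hne1
        · rw [hp'other w h1 h2]
          intro hc
          exact h1 (honly1 w hw hc)
    · subst hv
      intro w hw
      by_cases h1 : w = z1
      · subst h1; rw [hp'z1]; exact hne2
      · by_cases h2 : w = z2
        · subst h2; rw [hp'z2]; exact hne2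
        · rw [hp'other w h1 h2]
          intro hc
          exact h2 (honly2 w hw hc)
    · simp only [pmL, Finset.mem_filter] at hvL
      intro w hw
      by_cases h1 : w = z1
      · subst h1; rw [hp'z1]; exact fun hc => hvu hc.symm
      · by_cases h2 : w = z2
        · subst h2; rw [hp'z2]; exact fun hc => hvu hc.symm
        · rw [hp'other w h1 h2]
          exact hvL.2 w hw
  have hc1 : p z2 ∉ (pmL r p).erase u := fun h => hpz2_not (Finset.mem_of_mem_erase h)
  have hc2 : p z1 ∉ insert (p z2) ((pmL r p).erase u) := by
    simp only [Finset.mem_insert]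
    rintro (h | h)
    · exact hpp h
    · exact hpz1_not (Finset.mem_of_mem_erase h)
  have hcard1 : (insert (p z1) (insert (p z2) ((pmL r p).erase u))).card
      = ((pmL r p).erase u).card + 2 := by
    rw [Finset.card_insert_of_notMem hc2, Finset.card_insert_of_notMem hc1]
  have hcard2 : (pmL r p).card - 1 ≤ ((pmL r p).erase u).card :=
    Finset.pred_card_le_card_erase
  have hle : (pmL r p').card ≤ (pmL r p).card := hmax p' hp'valid
  have hle2 : (insert (p z1) (insert (p z2) ((pmL r p).erase u))).card ≤ (pmL r p').card :=
    Finset.card_le_card hsub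
  have hE : ((pmL r p).erase u).card ≤ (pmL r p).card :=
    Finset.card_le_card (Finset.erase_subset _ _)
  omega

-- The internal vertices of the tree induced by a parent map.
open scoped Classical in
private noncomputable def pmI (r : V) (p : V → V) : Finset V :=
  Finset.univ.filter (fun v => ∃ u, u ≠ r ∧ p u = v)

private lemma pm_count (r : V) (p : V → V) :
    ∑ v, (pmC r p v).card + 1 = Fintype.card V := by
  classical
  have h0 : (Finset.univ.filter (fun u : V => u ≠ r)).card
      = ∑ v, ((Finset.univ.filter (fun u : V => u ≠ r)).filter (fun u => p u = v)).card :=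
    Finset.card_eq_sum_card_fiberwise (fun x _ => Finset.mem_univ (p x))
  have h1 : ∀ v, ((Finset.univ.filter (fun u : V => u ≠ r)).filter (fun u => p u = v))
      = pmC r p v := by
    intro v
    ext u
    simp [pmC, and_assoc]
  have h2 : (Finset.univ.filter (fun u : V => u ≠ r)).card + 1 = Fintype.card V := by
    have he : Finset.univ.filter (fun u : V => u ≠ r) = Finset.univ.erase r := by
      ext u; simp [Finset.mem_erase]
    rw [he, Finset.card_erase_add_one (Finset.mem_univ r), Finset.card_univ]
  rw [← h2, h0]
  congr 1
  exact Finset.sum_congr rfl (fun v _ => by rw [h1 v])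

private lemma pmL_card (r : V) (p : V → V) :
    (pmL r p).card + (pmI r p).card = Fintype.card V := by
  classical
  have h : pmL r p = Finset.univ \ pmI r p := by
    ext v
    simp only [pmL, pmI, Finset.mem_filter, Finset.mem_univ, true_and, Finset.mem_sdiff,
      not_exists]
    constructor
    · intro hh u
      intro hc
      exact hh u hc.1 hc.2
    · intro hh u hu hpu
      exact hh u ⟨hu, hpu⟩
  rw [h, Finset.card_sdiff_add_card_eq_card (Finset.subset_univ _), Finset.card_univ]

private lemma pm_sum_int (r : V) (p : V → V) :
    ∑ v ∈ pmI r p, (pmC r p v).card = ∑ v, (pmC r p v).card := by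
  classical
  apply Finset.sum_subset (Finset.subset_univ _)
  intro v _ hv
  simp only [pmI, Finset.mem_filter, Finset.mem_univ, true_and, not_exists] at hv
  rw [Finset.card_eq_zero]
  ext u
  simp only [pmC, Finset.mem_filter, Finset.mem_univ, true_and, Finset.notMem_empty,
    iff_false]
  intro h
  exact hv u h

private lemma pm_sum_pred (r : V) (p : V → V) :
    ∑ v ∈ pmI r p, ((pmC r p v).card - 1) + (pmI r p).card
      = ∑ v ∈ pmI r p, (pmC r p v).card := by
  classical
  rw [Finset.card_eq_sum_ones (pmI r p), ← Finset.sum_add_distrib]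
  apply Finset.sum_congr rfl
  intro v hv
  simp only [pmI, Finset.mem_filter, Finset.mem_univ, true_and] at hv
  obtain ⟨u, hu1, hu2⟩ := hv
  have hpos : 0 < (pmC r p v).card := Finset.card_pos.2 ⟨u, by simp [pmC, hu1, hu2]⟩
  omega

private lemma pm_c_root {A : V → V → Prop} {r : V} {p : V → V}
    (hloop : ∀ v, ¬ A v v) (hroot : ∀ x y, x ≠ r → A r y → ¬ A x y)
    (hp : ∀ v, v ≠ r → A (p v) v) :
    (pmC r p r).card = outdeg A r := by
  classical
  have h : pmC r p r = Finset.univ.filter (fun u => A r u) := by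
    ext u
    simp only [pmC, Finset.mem_filter, Finset.mem_univ, true_and]
    constructor
    · rintro ⟨h1, h2⟩
      have hh := hp u h1
      rwa [h2] at hh
    · intro hA
      have hur : u ≠ r := by intro heq; exact hloop r (heq ▸ hA)
      refine ⟨hur, ?_⟩
      by_contra hpu
      exact hroot (p u) u hpu hA (hp u hur)
  rw [h, outdeg, show {u | A r u} = ↑(Finset.univ.filter (fun u => A r u)) from by ext u; simp,
    Set.ncard_coe_finset]

end AuxOutbranching

/-- A connected acyclic rooted digraph with `l` vertices of
indegree at least 2 and root of outdegree `d ≥ 2` has an outbranching with at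
least `(l + d − 1)/3 + 1` leaves. -/
theorem acyclic_outbranching_many_leaves [Fintype V] (A : V → V → Prop) (r : V)
    (hD : IsRootedDigraph A r) (hconn : RConnected A r) (hacy : Acyclic A)
    (hd : 2 ≤ outdeg A r) :
    ∃ T : V → V → Prop, IsOutbranching A r T ∧
      (({v | 2 ≤ indeg A v}.ncard : ℝ) + (outdeg A r : ℝ) - 1) / 3 + 1 ≤
        (leafCount T : ℝ) := by
  classical
  obtain ⟨hloop, hinr, -, hroot⟩ := hD
  have hin : ∀ v : V, v ≠ r → ∃ u, A u v := by
    intro v hv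
    rcases (hconn v).cases_tail with h | ⟨c, _, hc⟩
    · exact absurd h hv
    · exact ⟨c, hc⟩
  have hPne : Nonempty {p : V → V // ∀ v, v ≠ r → A (p v) v} := by
    refine ⟨⟨fun v => if h : v = r then v else Classical.choose (hin v h), ?_⟩⟩
    intro v hv
    simp only [dif_neg hv]
    exact Classical.choose_spec (hin v hv)
  obtain ⟨⟨p, hp⟩, hmax0⟩ :=
    Finite.exists_max (fun q : {p : V → V // ∀ v, v ≠ r → A (p v) v} => (pmL r q.1).card)
  have hmax : ∀ q : V → V, (∀ v, v ≠ r → A (q v) v) → (pmL r q).card ≤ (pmL r p).card :=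
    fun q hq => hmax0 ⟨q, hq⟩
  have hindegr : indeg A r = 0 := by
    rw [indeg, show {u | A u r} = (∅ : Set V) from by ext u; simp [hinr u]]
    simp
  set Sf := Finset.univ.filter (fun v => 2 ≤ indeg A v) with hSf
  have hSmem : ∀ z ∈ Sf, 2 ≤ indeg A z := by
    intro z hz
    simp only [hSf, Finset.mem_filter, Finset.mem_univ, true_and] at hz
    exact hz
  have hSne_r : ∀ z ∈ Sf, z ≠ r := by
    intro z hz heq
    have h2 := hSmem z hz
    rw [heq, hindegr] at h2
    omega
  have hSp_ne_r : ∀ z ∈ Sf, p z ≠ r := by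
    intro z hz hpz
    have hz2 : 1 < {u | A u z}.ncard := by
      have := hSmem z hz
      rw [indeg] at this
      omega
    obtain ⟨x, hx, hxr⟩ := Set.exists_ne_of_one_lt_ncard hz2 r
    have hArz : A r z := by
      have hh := hp z (hSne_r z hz)
      rwa [hpz] at hh
    exact hroot x z hxr hArz hx
  have hmemC : ∀ z ∈ Sf, z ∈ pmC r p (p z) := by
    intro z hz
    simp [pmC, hSne_r z hz]
  set dearf := Sf.filter (fun z => (pmC r p (p z)).card = 1) with hdearf
  set cheapf := Sf.filter (fun z => ¬ (pmC r p (p z)).card = 1) with hcheapf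
  have hsplit : dearf.card + cheapf.card = Sf.card :=
    Finset.card_filter_add_card_filter_not _
  -- dear vertices inject into the leaves
  have hdear : dearf.card ≤ (pmL r p).card := by
    have hex : ∀ z ∈ dearf, ∃ u, A u z ∧ u ≠ p z := by
      intro z hz
      have hzS : z ∈ Sf := Finset.mem_of_mem_filter z hz
      have hz2 : 1 < {u | A u z}.ncard := by
        have := hSmem z hzS
        rw [indeg] at this
        omega
      obtain ⟨x, hx, hxp⟩ := Set.exists_ne_of_one_lt_ncard hz2 (p z)
      exact ⟨x, hx, hxp⟩
    have hsingle : ∀ z ∈ dearf, pmC r p (p z) = {z} := by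
      intro z hz
      have h1 : (pmC r p (p z)).card = 1 := (Finset.mem_filter.1 hz).2
      obtain ⟨a, ha⟩ := Finset.card_eq_one.1 h1
      have hzmem := hmemC z (Finset.mem_of_mem_filter z hz)
      rw [ha] at hzmem ⊢
      rw [Finset.mem_singleton] at hzmem
      rw [hzmem]
    set f : V → V := fun z => if h : ∃ u, A u z ∧ u ≠ p z then h.choose else z with hf
    have hfspec : ∀ z ∈ dearf, A (f z) z ∧ f z ≠ p z := by
      intro z hz
      have h := hex z hz
      simp only [hf, dif_pos h]
      exact h.choose_spec
    apply Finset.card_le_card_of_injOn f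
    · intro z hz
      by_contra hnot
      have hzr := hSne_r z (Finset.mem_of_mem_filter z hz)
      obtain ⟨hA, hne⟩ := hfspec z hz
      have hint : ∃ w, w ≠ r ∧ p w = f z := by
        by_contra hcon
        push_neg at hcon
        refine hnot ?_
        simp only [Finset.mem_coe, pmL, Finset.mem_filter, Finset.mem_univ, true_and]
        exact fun u hu => hcon u hu
      exact pm_ex1 hp hmax hzr hA hne (hsingle z hz) hint
    · intro z1 hz1 z2 hz2 hff
      by_contra h12
      have hz1' : z1 ∈ dearf := hz1
      have hz2' : z2 ∈ dearf := hz2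
      obtain ⟨hA1, hne1⟩ := hfspec z1 hz1'
      obtain ⟨hA2, hne2⟩ := hfspec z2 hz2'
      exact pm_ex2 hp hmax h12 (hSne_r z1 (Finset.mem_of_mem_filter z1 hz1'))
        (hSne_r z2 (Finset.mem_of_mem_filter z2 hz2')) hA1 (by rw [hff]; exact hA2) hne1
        (by rw [hff]; exact hne2) (hsingle z1 hz1') (hsingle z2 hz2')
  -- cheap vertices are bounded by branching
  set B' := Finset.univ.filter (fun a => a ≠ r ∧ 2 ≤ (pmC r p a).card) with hB'
  have hcheap1 : cheapf ⊆ B'.biUnion (pmC r p) := by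
    intro z hz
    have hzS : z ∈ Sf := Finset.mem_of_mem_filter z hz
    have hge1 : 1 ≤ (pmC r p (p z)).card := Finset.card_pos.2 ⟨z, hmemC z hzS⟩
    have hne1 : ¬ (pmC r p (p z)).card = 1 := (Finset.mem_filter.1 hz).2
    rw [Finset.mem_biUnion]
    refine ⟨p z, ?_, hmemC z hzS⟩
    simp only [hB', Finset.mem_filter, Finset.mem_univ, true_and]
    exact ⟨hSp_ne_r z hzS, by omega⟩
  have hcheap2 : cheapf.card ≤ ∑ a ∈ B', (pmC r p a).card :=
    le_trans (Finset.card_le_card hcheap1) Finset.card_biUnion_le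
  have hcheap3 : ∑ a ∈ B', (pmC r p a).card ≤ 2 * ∑ a ∈ B', ((pmC r p a).card - 1) := by
    rw [Finset.mul_sum]
    apply Finset.sum_le_sum
    intro a ha
    have h2a : 2 ≤ (pmC r p a).card := (Finset.mem_filter.1 ha).2.2
    omega
  have hcr : (pmC r p r).card = outdeg A r := pm_c_root hloop hroot hp
  have hrI : r ∈ pmI r p := by
    have h2 : 2 ≤ (pmC r p r).card := by rw [hcr]; exact hd
    obtain ⟨u, hu⟩ := Finset.card_pos.1 (show 0 < (pmC r p r).card by omega)
    simp only [pmC, Finset.mem_filter, Finset.mem_univ, true_and] at hu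
    simp only [pmI, Finset.mem_filter, Finset.mem_univ, true_and]
    exact ⟨u, hu⟩
  have hsub4 : B' ⊆ (pmI r p).erase r := by
    intro a ha
    simp only [hB', Finset.mem_filter, Finset.mem_univ, true_and] at ha
    obtain ⟨u, hu⟩ := Finset.card_pos.1 (by omega : 0 < (pmC r p a).card)
    simp only [pmC, Finset.mem_filter, Finset.mem_univ, true_and] at hu
    refine Finset.mem_erase.2 ⟨ha.1, ?_⟩
    simp only [pmI, Finset.mem_filter, Finset.mem_univ, true_and]
    exact ⟨u, hu⟩
  have hcheap4 : ∑ a ∈ B', ((pmC r p a).card - 1)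
      ≤ ∑ a ∈ (pmI r p).erase r, ((pmC r p a).card - 1) :=
    Finset.sum_le_sum_of_subset_of_nonneg hsub4 (fun _ _ _ => Nat.zero_le _)
  have hsplit2 : ((pmC r p r).card - 1) + ∑ a ∈ (pmI r p).erase r, ((pmC r p a).card - 1)
      = ∑ a ∈ pmI r p, ((pmC r p a).card - 1) :=
    Finset.add_sum_erase (pmI r p) (fun a => (pmC r p a).card - 1) hrI
  have e1 : ∑ v, (pmC r p v).card + 1 = Fintype.card V := pm_count r p
  have e2 : (pmL r p).card + (pmI r p).card = Fintype.card V := pmL_card r p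
  have e3 : ∑ v ∈ pmI r p, (pmC r p v).card = ∑ v, (pmC r p v).card := pm_sum_int r p
  have e4 : ∑ v ∈ pmI r p, ((pmC r p v).card - 1) + (pmI r p).card
      = ∑ v ∈ pmI r p, (pmC r p v).card := pm_sum_pred r p
  have hnat : Sf.card + 2 * outdeg A r ≤ 3 * (pmL r p).card := by omega
  refine ⟨pmT r p, pmT_outbranching hacy hp, ?_⟩
  rw [leafCount_pmT]
  have hSncard : {v | 2 ≤ indeg A v}.ncard = Sf.card := by
    rw [show {v | 2 ≤ indeg A v} = ↑Sf from by ext v; simp [hSf], Set.ncard_coe_finset]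
  rw [hSncard]
  have h3 : (Sf.card : ℝ) + 2 * (outdeg A r : ℝ) ≤ 3 * ((pmL r p).card : ℝ) := by
    exact_mod_cast hnat
  have hd' : (2 : ℝ) ≤ (outdeg A r : ℝ) := by exact_mod_cast hd
  linarith
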